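/- The Weil map α : C(ℚ) → ℚ^×/ℚ^×² is a group homomorphism: for all P, Q ∈ C(ℚ) one has α(P + Q) = α(P)·α(Q) in ℚ^×/ℚ^×². -/

import Mathlib

open Filter Real

/-- The defining equation of the Pell conic `X² - ΔY² = 4`. -/
def PellSol (Δ : ℚ) (P : ℚ × ℚ) : Prop := P.1 ^ 2 - Δ * P.2 ^ 2 = 4

/-- The rational points on the Pell conic `X² - ΔY² = 4`. -/
def Conic (Δ : ℚ) : Type := {P : ℚ × ℚ // PellSol Δ P}

namespace Conic

variable {Δ : ℚ}

/-- Addition on the Pell conic. -/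
instance : Add (Conic Δ) :=
  ⟨fun P Q => ⟨((P.val.1 * Q.val.1 + Δ * P.val.2 * Q.val.2) / 2,
    (P.val.1 * Q.val.2 + P.val.2 * Q.val.1) / 2), by
      have hP := P.property
      have hQ := Q.property
      unfold PellSol at *
      dsimp only
      linear_combination ((Q.val.1 ^ 2 - Δ * Q.val.2 ^ 2) / 4) * hP + hQ⟩⟩

/-- The neutral element `(2,0)` of the Pell conic. -/
instance : Zero (Conic Δ) := ⟨⟨(2, 0), by unfold PellSol; norm_num⟩⟩

/-- The negative of a point on the Pell conic. -/
instance : Neg (Conic Δ) :=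
  ⟨fun P => ⟨(P.val.1, -P.val.2), by
    have hP := P.property
    unfold PellSol at *
    dsimp only
    linear_combination hP⟩⟩

@[simp] lemma add_val (P Q : Conic Δ) :
    (P + Q).val = ((P.val.1 * Q.val.1 + Δ * P.val.2 * Q.val.2) / 2,
      (P.val.1 * Q.val.2 + P.val.2 * Q.val.1) / 2) := rfl

@[simp] lemma zero_val : ((0 : Conic Δ)).val = (2, 0) := rfl

@[simp] lemma neg_val (P : Conic Δ) : (-P).val = (P.val.1, -P.val.2) := rfl

protected lemma add_assoc' (P Q R : Conic Δ) : P + Q + R = P + (Q + R) := by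
  apply Subtype.ext
  rw [Prod.ext_iff, add_val, add_val, add_val, add_val]
  constructor <;> (dsimp only; ring)

protected lemma zero_add' (P : Conic Δ) : 0 + P = P := by
  apply Subtype.ext
  rw [Prod.ext_iff, add_val, zero_val]
  constructor <;> (dsimp only; ring)

protected lemma add_zero' (P : Conic Δ) : P + 0 = P := by
  apply Subtype.ext
  rw [Prod.ext_iff, add_val, zero_val]
  constructor <;> (dsimp only; ring)

protected lemma neg_add_cancel' (P : Conic Δ) : -P + P = 0 := by
  have hP := P.property
  unfold PellSol at hP
  apply Subtype.ext
  rw [Prod.ext_iff, add_val, neg_val, zero_val]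
  constructor
  · dsimp only
    linear_combination hP / 2
  · dsimp only; ring

protected lemma add_comm' (P Q : Conic Δ) : P + Q = Q + P := by
  apply Subtype.ext
  rw [Prod.ext_iff, add_val, add_val]
  constructor <;> (dsimp only; ring)

/-- The group structure on the rational points of the Pell conic. -/
instance : AddCommGroup (Conic Δ) where
  add := (· + ·)
  zero := 0
  neg := Neg.neg
  nsmul := nsmulRec
  zsmul := zsmulRec
  add_assoc := Conic.add_assoc'
  zero_add := Conic.zero_add'
  add_zero := Conic.add_zero'
  neg_add_cancel := Conic.neg_add_cancel'
  add_comm := Conic.add_comm'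

end Conic

/-- The Weil map `α : C(ℚ) → ℚ^×/ℚ^×²` on the Pell conic `X² - ΔY² = 4`,
sending `(x,y)` to the class of `x + 2` if `x ≠ -2`, and `(-2,0)` to the class of `-Δ`. -/
noncomputable def weilMap (Δ : ℚ) (hΔ : Δ ≠ 0) (P : Conic Δ) :
    ℚˣ ⧸ (powMonoidHom 2 : ℚˣ →* ℚˣ).range :=
  if h : P.val.1 = -2 then
    QuotientGroup.mk (Units.mk0 (-Δ) (neg_ne_zero.mpr hΔ))
  else
    QuotientGroup.mk (Units.mk0 (P.val.1 + 2) (fun hc => h (by linarith)))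

lemma mk_eq_mk_mul (a b c t : ℚ) (ha : a ≠ 0) (hb : b ≠ 0) (hc : c ≠ 0) (ht : t ≠ 0)
    (h : b * c = a * t ^ 2) :
    (QuotientGroup.mk (Units.mk0 a ha) : ℚˣ ⧸ (powMonoidHom 2 : ℚˣ →* ℚˣ).range) =
      QuotientGroup.mk (Units.mk0 b hb) * QuotientGroup.mk (Units.mk0 c hc) := by
  rw [← QuotientGroup.mk_mul, QuotientGroup.eq]
  refine ⟨Units.mk0 t ht, ?_⟩
  ext
  simp only [powMonoidHom_apply, Units.val_pow_eq_pow_val, Units.val_mul, Units.val_inv_eq_inv_val,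
    Units.val_mk0]
  field_simp
  linear_combination -h

lemma y_zero {Δ : ℚ} (hΔ : Δ ≠ 0) {x y : ℚ} (h : x ^ 2 - Δ * y ^ 2 = 4) (hx : x ^ 2 = 4) :
    y = 0 := by
  have : Δ * y ^ 2 = 0 := by linarith
  rcases mul_eq_zero.mp this with h' | h'
  · exact absurd h' hΔ
  · exact pow_eq_zero_iff (by norm_num) |>.mp h'

theorem weilMap_hom' (Δ : ℚ) (hΔ0 : Δ ≠ 0) (P Q : Conic Δ) :
    weilMap Δ hΔ0 (P + Q) = weilMap Δ hΔ0 P * weilMap Δ hΔ0 Q := by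
  obtain ⟨⟨x1, y1⟩, hP⟩ := P
  obtain ⟨⟨x2, y2⟩, hQ⟩ := Q
  have hP' : x1 ^ 2 - Δ * y1 ^ 2 = 4 := hP
  have hQ' : x2 ^ 2 - Δ * y2 ^ 2 = 4 := hQ
  unfold weilMap
  have hv : ((⟨(x1, y1), hP⟩ + ⟨(x2, y2), hQ⟩ : Conic Δ)).val = ((x1 * x2 + Δ * y1 * y2) / 2,
      (x1 * y2 + y1 * x2) / 2) := rfl
  simp only [hv]
  split_ifs with h3 h1 h2 h2 h1 h2 h2
  -- case: x3 = -2, x1 = -2, x2 = -2 : impossible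
  · exfalso
    rw [h1, h2, y_zero hΔ0 hP' (by rw [h1]; norm_num),
      y_zero hΔ0 hQ' (by rw [h2]; norm_num)] at h3
    norm_num at h3
  -- case: x3 = -2, x1 = -2, x2 ≠ -2
  · have hy1 : y1 = 0 := y_zero hΔ0 hP' (by rw [h1]; norm_num)
    rw [h1, hy1] at h3
    have hx2 : x2 = 2 := by
      field_simp at h3; linarith
    exact mk_eq_mk_mul _ _ _ 2 _ _ _ (by norm_num) (by rw [hx2]; ring)
  -- case: x3 = -2, x1 ≠ -2, x2 = -2
  · have hy2 : y2 = 0 := y_zero hΔ0 hQ' (by rw [h2]; norm_num)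
    rw [h2, hy2] at h3
    have hx1 : x1 = 2 := by
      field_simp at h3; linarith
    exact mk_eq_mk_mul _ _ _ 2 _ _ _ (by norm_num) (by rw [hx1]; ring)
  -- case: x3 = -2, x1 ≠ -2, x2 ≠ -2
  · have hy3 : (x1 * y2 + y1 * x2) / 2 = 0 := by
      have h' : ((x1 * x2 + Δ * y1 * y2) / 2) ^ 2 - Δ * ((x1 * y2 + y1 * x2) / 2) ^ 2 = 4 := by
        linear_combination ((x2 ^ 2 - Δ * y2 ^ 2) / 4) * hP' + hQ'
      exact y_zero hΔ0 h' (by rw [h3]; norm_num)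
    have hy3' : x1 * y2 + y1 * x2 = 0 := by linarith
    have h3' : x1 * x2 + Δ * y1 * y2 = -4 := by
      field_simp at h3; linarith
    have hy1 : y1 ≠ 0 := by
      intro hy1
      have hx1sq : x1 ^ 2 = 4 := by rw [hy1] at hP'; linarith
      have hx1 : x1 = 2 := by
        rcases mul_eq_zero.mp (show (x1 - 2) * (x1 + 2) = 0 by linear_combination hx1sq)
          with h | h
        · linarith
        · exact absurd (by linarith) h1
      rw [hy1, hx1] at h3'
      exact h2 (by linarith)
    have hsq : (y2 - y1) * (y2 + y1) = 0 := by
      linear_combination ((x1 * y2 - x2 * y1) / 4) * hy3' - (y2 ^ 2 / 4) * hP' +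
        (y1 ^ 2 / 4) * hQ'
    rcases mul_eq_zero.mp hsq with hy | hy
    · -- y2 = y1, hence x2 = -x1
      have hy : y2 = y1 := by linarith
      have hx2 : x2 = -x1 := by
        rcases mul_eq_zero.mp (show (x1 + x2) * y1 = 0 by rw [hy] at hy3'; linarith)
          with h | h
        · linarith
        · exact absurd h hy1
      refine mk_eq_mk_mul _ _ _ y1 _ _ _ hy1 ?_
      rw [hx2]
      linear_combination -hP'
    · -- y2 = -y1, contradiction
      exfalso
      have hy : y2 = -y1 := by linarith
      have hx2 : x2 = x1 := by
        rcases mul_eq_zero.mp (show (x2 - x1) * y1 = 0 by rw [hy] at hy3'; linarith)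
          with h | h
        · linarith
        · exact absurd h hy1
      rw [hx2, hy] at h3'
      have : x1 ^ 2 - Δ * y1 ^ 2 = -4 := by linear_combination h3'
      linarith
  -- case: x3 ≠ -2, x1 = -2, x2 = -2
  · have hy1 : y1 = 0 := y_zero hΔ0 hP' (by rw [h1]; norm_num)
    have hy2 : y2 = 0 := y_zero hΔ0 hQ' (by rw [h2]; norm_num)
    refine mk_eq_mk_mul _ _ _ (Δ / 2) _ _ _ (div_ne_zero hΔ0 two_ne_zero) ?_
    rw [h1, h2, hy1, hy2]
    ring
  -- case: x3 ≠ -2, x1 = -2, x2 ≠ -2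
  · have hy1 : y1 = 0 := y_zero hΔ0 hP' (by rw [h1]; norm_num)
    have hy2 : y2 ≠ 0 := by
      intro hy2
      have hx2sq : x2 ^ 2 = 4 := by rw [hy2] at hQ'; linarith
      have hx2 : x2 = 2 := by
        rcases mul_eq_zero.mp (show (x2 - 2) * (x2 + 2) = 0 by linear_combination hx2sq)
          with h | h
        · linarith
        · exact absurd (by linarith) h2
      apply h3
      rw [h1, hy1, hx2]; ring
    refine mk_eq_mk_mul _ _ _ ((x2 + 2) / y2) _ _ _
      (div_ne_zero (fun hc => h2 (by linarith)) hy2) ?_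
    rw [h1, hy1]
    field_simp
    linear_combination (2 * (x2 + 2)) * hQ'
  -- case: x3 ≠ -2, x1 ≠ -2, x2 = -2
  · have hy2 : y2 = 0 := y_zero hΔ0 hQ' (by rw [h2]; norm_num)
    have hy1 : y1 ≠ 0 := by
      intro hy1
      have hx1sq : x1 ^ 2 = 4 := by rw [hy1] at hP'; linarith
      have hx1 : x1 = 2 := by
        rcases mul_eq_zero.mp (show (x1 - 2) * (x1 + 2) = 0 by linear_combination hx1sq)
          with h | h
        · linarith
        · exact absurd (by linarith) h1
      apply h3
      rw [h2, hy2, hx1]; ring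
    refine mk_eq_mk_mul _ _ _ ((x1 + 2) / y1) _ _ _
      (div_ne_zero (fun hc => h1 (by linarith)) hy1) ?_
    rw [h2, hy2]
    field_simp
    linear_combination (2 * (x1 + 2)) * hP'
  -- case: generic
  · have hident : (x1 + 2) * (x2 + 2) * ((x1 * x2 + Δ * y1 * y2) / 2 + 2) =
        (x1 + x2 + (x1 * x2 + Δ * y1 * y2) / 2 + 2) ^ 2 := by
      linear_combination (Δ * y2 ^ 2 / 4) * hP' + (x1 ^ 2 / 4 - 1) * hQ'
    have h1' : x1 + 2 ≠ 0 := fun hc => h1 (by linarith)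
    have h2' : x2 + 2 ≠ 0 := fun hc => h2 (by linarith)
    have h3' : (x1 * x2 + Δ * y1 * y2) / 2 + 2 ≠ 0 := fun hc => h3 (by linarith)
    have hs : x1 + x2 + (x1 * x2 + Δ * y1 * y2) / 2 + 2 ≠ 0 := by
      intro hc
      rw [hc] at hident
      exact (mul_ne_zero (mul_ne_zero h1' h2') h3') (by rw [hident]; ring)
    refine mk_eq_mk_mul _ _ _
      ((x1 + x2 + (x1 * x2 + Δ * y1 * y2) / 2 + 2) / ((x1 * x2 + Δ * y1 * y2) / 2 + 2))
      _ _ _ (div_ne_zero hs h3') ?_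
    rw [div_pow, mul_div_assoc', eq_div_iff (pow_ne_zero 2 h3')]
    linear_combination ((x1 * x2 + Δ * y1 * y2) / 2 + 2) * hident

/-- The Weil map `α : C(ℚ) → ℚ^×/ℚ^×²` is a group homomorphism. -/
theorem weilMap_hom (d : ℤ) (hsf : Squarefree d) (hd0 : d ≠ 0) (hd1 : d ≠ 1)
    (Δ : ℤ) (hΔ : Δ = if d % 4 = 1 then d else 4 * d)
    (hΔ0 : (Δ : ℚ) ≠ 0) (P Q : Conic (Δ : ℚ)) :
    weilMap (Δ : ℚ) hΔ0 (P + Q) = weilMap (Δ : ℚ) hΔ0 P * weilMap (Δ : ℚ) hΔ0 Q :=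
  weilMap_hom' (Δ : ℚ) hΔ0 P Q
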